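/- Let k be a field, n ≥ 1, and 1 ≤ i, j ≤ n, and let α^l : k[u]/(u^i) → k[u]/(u^j) be the k[u]/(u^n)-module homomorphism sending the class of 1 to the class of u^l, where max(0, j−i) ≤ l < j. Then α^l factors through a free k[u]/(u^n)-module if and only if l ≥ n − i. -/

import Mathlib

set_option synthInstance.maxHeartbeats 1000000
set_option maxHeartbeats 1000000

namespace AnSing

variable (k : Type) [Field k]

/-- The ring `k[u]/(uⁿ)`. -/
abbrev AnRing (n : ℕ) : Type := Polynomial k ⧸ (Ideal.span {(Polynomial.X : Polynomial k) ^ n})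

/-- The class of `u` in `k[u]/(uⁿ)`. -/
noncomputable def uu (n : ℕ) : AnRing k n := Ideal.Quotient.mk _ Polynomial.X

/-- The `k[u]/(uⁿ)`-module `k[u]/(uⁱ)`. -/
abbrev Vmod (n i : ℕ) := AnRing k n ⧸ (Ideal.span {uu k n ^ i})

/-- The `k[u]/(uⁿ)`-module map `α^l : k[u]/(uⁱ) ⟶ k[u]/(uʲ)` sending the class of `1`
to the class of `uˡ`; it is well defined as soon as `j ≤ i + l`. -/
noncomputable def alphaMap (n i j l : ℕ) (h : j ≤ i + l) :
    Vmod k n i →ₗ[AnRing k n] Vmod k n j :=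
  Submodule.mapQ _ _ ((uu k n ^ l) • (LinearMap.id : AnRing k n →ₗ[AnRing k n] AnRing k n))
    (by
      refine (Submodule.span_singleton_le_iff_mem _ _).2 ?_
      simp only [Submodule.mem_comap, LinearMap.smul_apply, LinearMap.id_apply,
        smul_eq_mul]
      rw [← pow_add]
      exact Ideal.mem_span_singleton.2 (pow_dvd_pow _ (by omega)))

lemma uu_pow_mk (n m : ℕ) :
    uu k n ^ m = Ideal.Quotient.mk _ ((Polynomial.X : Polynomial k) ^ m) := by
  simp [uu, map_pow]

lemma uu_pow_n (n : ℕ) : uu k n ^ n = 0 := by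
  rw [uu_pow_mk, Ideal.Quotient.eq_zero_iff_mem]
  exact Ideal.subset_span rfl

/-- If `uⁱ * c = 0` in `k[u]/(uⁿ)` then `c` is a multiple of `u^(n-i)`. -/
lemma ann_lemma (n i : ℕ) (hin : i ≤ n) (c : AnRing k n)
    (h : uu k n ^ i * c = 0) : ∃ d, c = uu k n ^ (n - i) * d := by
  obtain ⟨f, rfl⟩ := Ideal.Quotient.mk_surjective c
  rw [uu_pow_mk, ← map_mul, Ideal.Quotient.eq_zero_iff_mem,
    Ideal.mem_span_singleton] at h
  have hd : (Polynomial.X : Polynomial k) ^ (n - i) ∣ f := by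
    have h2 : (Polynomial.X : Polynomial k) ^ i * Polynomial.X ^ (n - i) ∣
        Polynomial.X ^ i * f := by
      rw [← pow_add, Nat.add_sub_cancel' hin]; exact h.trans (dvd_refl _)
    exact (mul_dvd_mul_iff_left (pow_ne_zero i Polynomial.X_ne_zero)).1 h2
  obtain ⟨g, rfl⟩ := hd
  exact ⟨Ideal.Quotient.mk _ g, by rw [uu_pow_mk, ← map_mul]⟩

/-- The map `α^l : k[u]/(uⁱ) → k[u]/(uʲ)`, `1 ↦ uˡ`, factors through a free
`k[u]/(uⁿ)`-module if and only if `l ≥ n - i`. -/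
theorem alpha_factors_free_iff (n i j l : ℕ) (hn : 1 ≤ n) (hi1 : 1 ≤ i) (hin : i ≤ n)
    (hj1 : 1 ≤ j) (hjn : j ≤ n) (hl1 : j - i ≤ l) (hl2 : l < j) :
    (∃ (F : Type) (_ : AddCommGroup F) (_ : Module (AnRing k n) F),
        Module.Free (AnRing k n) F ∧
        ∃ (p : Vmod k n i →ₗ[AnRing k n] F) (q : F →ₗ[AnRing k n] Vmod k n j),
          q.comp p = alphaMap k n i j l (by omega)) ↔ n - i ≤ l := by
  constructor
  · rintro ⟨F, _, _, hFree, p, q, hqp⟩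
    by_contra hcon
    push_neg at hcon
    -- so l < n - i
    set b := Module.Free.chooseBasis (AnRing k n) F with hb
    set x := p (Submodule.Quotient.mk 1) with hx
    have hxann : (uu k n ^ i) • x = 0 := by
      rw [hx, ← map_smul]
      have h1 : (uu k n ^ i) • (Submodule.Quotient.mk (1 : AnRing k n) :
          Vmod k n i) = 0 := by
        rw [← Submodule.Quotient.mk_smul, smul_eq_mul, mul_one,
          Submodule.Quotient.mk_eq_zero]
        exact Ideal.subset_span rfl
      rw [h1, map_zero]
    have hcoord : ∀ s, ∃ d, b.repr x s = uu k n ^ (n - i) * d := by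
      intro s
      apply ann_lemma k n i hin
      have h2 : (uu k n ^ i) • b.repr x = 0 := by
        rw [← map_smul, hxann, map_zero]
      have h3 := DFunLike.congr_fun h2 s
      simpa [smul_eq_mul] using h3
    choose d hd using hcoord
    have hxeq : x = (uu k n ^ (n - i)) •
        (((b.repr x).support).sum fun s => d s • b s) := by
      conv_lhs => rw [← b.linearCombination_repr x]
      rw [Finsupp.linearCombination_apply, Finsupp.sum, Finset.smul_sum]
      refine Finset.sum_congr rfl fun s _ => ?_
      rw [smul_smul, ← hd s]
    have hql : alphaMap k n i j l (by omega) (Submodule.Quotient.mk 1) =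
        Submodule.Quotient.mk (uu k n ^ l) := by
      rw [alphaMap, Submodule.mapQ_apply]
      simp
    have hq : (Submodule.Quotient.mk (uu k n ^ l) : Vmod k n j) =
        (uu k n ^ (n - i)) • q (((b.repr x).support).sum fun s => d s • b s) := by
      rw [← hql, ← hqp]
      simp only [LinearMap.comp_apply]
      rw [← hx]
      conv_lhs => rw [hxeq]
      rw [map_smul]
    obtain ⟨a, ha⟩ := Submodule.Quotient.mk_surjective _
      (q (((b.repr x).support).sum fun s => d s • b s))
    rw [← ha, ← Submodule.Quotient.mk_smul, smul_eq_mul] at hq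
    rw [Submodule.Quotient.eq, Ideal.mem_span_singleton] at hq
    obtain ⟨c, hc⟩ := hq
    obtain ⟨g, rfl⟩ := Ideal.Quotient.mk_surjective a
    obtain ⟨e, he⟩ := Ideal.Quotient.mk_surjective c
    rw [← he] at hc
    have hpoly : ((Polynomial.X : Polynomial k) ^ l - Polynomial.X ^ (n - i) * g
        - Polynomial.X ^ j * e) ∈ Ideal.span {(Polynomial.X : Polynomial k) ^ n} := by
      rw [← Ideal.Quotient.eq_zero_iff_mem]
      have : (Ideal.Quotient.mk (Ideal.span {(Polynomial.X : Polynomial k) ^ n}))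
          ((Polynomial.X : Polynomial k) ^ l - Polynomial.X ^ (n - i) * g
          - Polynomial.X ^ j * e)
          = uu k n ^ l - uu k n ^ (n - i) * Ideal.Quotient.mk _ g
            - uu k n ^ j * Ideal.Quotient.mk _ e := by
        simp [uu_pow_mk, map_sub, map_mul]
      rw [this, sub_eq_zero, ← hc]
    rw [Ideal.mem_span_singleton] at hpoly
    obtain ⟨f, hf⟩ := hpoly
    have heq : (Polynomial.X : Polynomial k) ^ l =
        Polynomial.X ^ (n - i) * g + Polynomial.X ^ j * e + Polynomial.X ^ n * f := by
      rw [mul_comm ((Polynomial.X : Polynomial k) ^ n) f] at hf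
      rw [mul_comm f ((Polynomial.X : Polynomial k) ^ n)] at hf
      linear_combination hf
    have hcoeff := congrArg (fun p => Polynomial.coeff p l) heq
    simp only [Polynomial.coeff_add] at hcoeff
    have z1 : ((Polynomial.X : Polynomial k) ^ (n - i) * g).coeff l = 0 :=
      Polynomial.X_pow_dvd_iff.1 (dvd_mul_right _ _) l hcon
    have z2 : ((Polynomial.X : Polynomial k) ^ j * e).coeff l = 0 :=
      Polynomial.X_pow_dvd_iff.1 (dvd_mul_right _ _) l hl2
    have z3 : ((Polynomial.X : Polynomial k) ^ n * f).coeff l = 0 :=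
      Polynomial.X_pow_dvd_iff.1 (dvd_mul_right _ _) l (by omega)
    rw [z1, z2, z3, Polynomial.coeff_X_pow] at hcoeff
    simp at hcoeff
  · intro hl
    refine ⟨AnRing k n, inferInstance, inferInstance, inferInstance,
      Submodule.liftQ _ ((uu k n ^ (n - i)) •
        (LinearMap.id : AnRing k n →ₗ[AnRing k n] AnRing k n)) ?_,
      (Submodule.mkQ _).comp ((uu k n ^ (l - (n - i))) •
        (LinearMap.id : AnRing k n →ₗ[AnRing k n] AnRing k n)), ?_⟩
    · refine (Submodule.span_singleton_le_iff_mem _ _).2 ?_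
      simp only [LinearMap.mem_ker, LinearMap.smul_apply, LinearMap.id_apply,
        smul_eq_mul]
      rw [← pow_add, Nat.sub_add_cancel hin, uu_pow_n]
    · refine Submodule.linearMap_qext _ ?_
      refine LinearMap.ext fun a => ?_
      simp only [LinearMap.comp_apply, Submodule.mkQ_apply, Submodule.liftQ_apply,
        LinearMap.smul_apply, LinearMap.id_apply, smul_eq_mul, alphaMap,
        Submodule.mapQ_apply]
      congr 1
      rw [← mul_assoc, ← pow_add, Nat.sub_add_cancel hl]

end AnSing
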